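/- Let (X,ρ) be a complete metric space and F : X → Set(X) a set-valued mapping satisfying: (i) F(x) is closed for every x ∈ X; (ii) x ∈ F(x) for every x ∈ X; (iii) x₂ ∈ F(x₁) implies F(x₂) ⊆ F(x₁) for all x₁, x₂ ∈ X; (iv) lim_{n→∞} ρ(x_n, x_{n+1}) = 0 for every sequence (x_n) in X with x_{n+1} ∈ F(x_n) for all n. Then there exists x₀ ∈ X with F(x₀) = {x₀}; moreover, for every x̄ ∈ X such a point x₀ can be found in F(x̄). -/

import Mathlib

open Filter ENNReal

/-- Dancs–Hegedűs–Medvegyev: let `(X,ρ)` be a complete metric space and `F : X → Set X`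
satisfy: (i) each `F x` is closed; (ii) `x ∈ F x`; (iii) `x₂ ∈ F x₁ → F x₂ ⊆ F x₁`;
(iv) `ρ(x_n, x_{n+1}) → 0` for every generalized Picard sequence. Then `F` has a
stationary point `x₀` (i.e. `F x₀ = {x₀}`), and for every `x̄` such a point can be found
in `F x̄`. -/
theorem dancs_hegedus_medvegyev {X : Type*} [MetricSpace X] [CompleteSpace X] [Nonempty X]
    (F : X → Set X)
    (h1 : ∀ x, IsClosed (F x))
    (h2 : ∀ x, x ∈ F x)
    (h3 : ∀ x₁ x₂ : X, x₂ ∈ F x₁ → F x₂ ⊆ F x₁)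
    (h4 : ∀ u : ℕ → X, (∀ n, u (n + 1) ∈ F (u n)) →
      Filter.Tendsto (fun n => dist (u n) (u (n + 1))) Filter.atTop (nhds 0)) :
    (∃ x₀ : X, F x₀ = {x₀}) ∧ ∀ xbar : X, ∃ x₀ ∈ F xbar, F x₀ = {x₀} := by
  have main : ∀ xbar : X, ∃ x₀ ∈ F xbar, F x₀ = {x₀} := by
    intro xbar
    set s : X → ℝ≥0∞ := fun x => ⨆ y ∈ F x, edist x y with hs
    -- sup estimate: edist x y ≤ s x for y ∈ F x
    have hle : ∀ x, ∀ y ∈ F x, edist x y ≤ s x := by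
      intro x y hy
      exact le_iSup₂ (f := fun y (_ : y ∈ F x) => edist x y) y hy
    -- choice of next point
    have hchoice : ∀ x : X, ∃ y ∈ F x, min (s x) 1 ≤ 2 * edist x y := by
      intro x
      rcases eq_or_ne (s x) 0 with h0 | h0
      · exact ⟨x, h2 x, by simp [h0]⟩
      · have hmin : min (s x) 1 ≠ 0 := (lt_min h0.bot_lt one_pos).ne'
        have hmint : min (s x) 1 ≠ ⊤ :=
          ne_top_of_le_ne_top one_ne_top (min_le_right _ _)
        have hlt : min (s x) 1 / 2 < s x :=
          lt_of_lt_of_le (ENNReal.half_lt_self hmin hmint) (min_le_left _ _)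
        rw [hs] at hlt
        simp only [lt_iSup_iff] at hlt
        obtain ⟨y, hyF, hy⟩ := hlt
        refine ⟨y, hyF, ?_⟩
        calc min (s x) 1 = 2 * (min (s x) 1 / 2) := by
              rw [ENNReal.mul_div_cancel two_ne_zero ofNat_ne_top]
          _ ≤ 2 * edist x y := by gcongr
    choose g hg1 hg2 using hchoice
    set u : ℕ → X := fun n => g^[n] xbar with hu
    have hstep : ∀ n, u (n + 1) = g (u n) := by
      intro n; simp [hu, Function.iterate_succ_apply']
    have hPic : ∀ n, u (n + 1) ∈ F (u n) := by
      intro n; rw [hstep n]; exact hg1 (u n)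
    have hmem : ∀ n m, n ≤ m → u m ∈ F (u n) := by
      intro n m hnm
      induction m with
      | zero => simp_all [Nat.le_zero.mp hnm, h2]
      | succ m ih =>
        rcases Nat.lt_or_ge n (m + 1) with h | h
        · exact h3 (u n) (u m) (ih (Nat.lt_succ_iff.mp h)) (hPic m)
        · have : n = m + 1 := le_antisymm hnm h
          subst this; exact h2 _
    -- edist of consecutive terms → 0
    have hed : Tendsto (fun n => edist (u n) (u (n + 1))) atTop (nhds 0) := by
      have := h4 u hPic
      have : Tendsto (fun n => ENNReal.ofReal (dist (u n) (u (n + 1)))) atTop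
          (nhds (ENNReal.ofReal 0)) := (ENNReal.continuous_ofReal.tendsto 0).comp this
      simpa [edist_dist] using this
    -- s (u n) → 0
    have hs0 : Tendsto (fun n => s (u n)) atTop (nhds 0) := by
      rw [ENNReal.tendsto_nhds_zero]
      intro ε hε
      set ε' : ℝ≥0∞ := min ε 1 with hε'def
      have hε'0 : ε' ≠ 0 := (lt_min hε one_pos).ne'
      have hδ : (0:ℝ≥0∞) < ε' / 2 / 2 :=
        ENNReal.div_pos (ENNReal.div_pos hε'0 ofNat_ne_top).ne' ofNat_ne_top
      have := (ENNReal.tendsto_nhds_zero.mp hed) (ε' / 2 / 2) hδ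
      filter_upwards [this] with n hn
      have h2e : 2 * edist (u n) (u (n + 1)) ≤ ε' / 2 := by
        calc 2 * edist (u n) (u (n + 1)) ≤ 2 * (ε' / 2 / 2) := by gcongr
          _ = ε' / 2 := ENNReal.mul_div_cancel two_ne_zero ofNat_ne_top
      have hkey : min (s (u n)) 1 ≤ ε' / 2 := by
        calc min (s (u n)) 1 ≤ 2 * edist (u n) (u (n + 1)) := by
              rw [hstep n]; exact hg2 (u n)
          _ ≤ ε' / 2 := h2e
      have hlt1 : ε' / 2 < 1 := by
        calc ε' / 2 ≤ 1 / 2 := by gcongr; exact min_le_right _ _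
          _ < 1 := by simp [ENNReal.one_half_lt_one]
      have hsle : s (u n) ≤ ε' / 2 := by
        rcases le_or_gt (s (u n)) 1 with h | h
        · rwa [min_eq_left h] at hkey
        · rw [min_eq_right h.le] at hkey
          exact absurd (hkey.trans_lt hlt1) (lt_irrefl _)
      calc s (u n) ≤ ε' / 2 := hsle
        _ ≤ ε' := ENNReal.half_le_self
        _ ≤ ε := min_le_left _ _
    -- Cauchy
    have hcauchy : CauchySeq u := by
      rw [EMetric.cauchySeq_iff]
      intro ε hε
      set ε' : ℝ≥0∞ := min ε 1 with hε'def
      have hε'0 : ε' ≠ 0 := (lt_min hε one_pos).ne'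
      have hε't : ε' ≠ ⊤ := ne_top_of_le_ne_top one_ne_top (min_le_right _ _)
      have hδ : (0:ℝ≥0∞) < ε' / 2 / 2 :=
        ENNReal.div_pos (ENNReal.div_pos hε'0 ofNat_ne_top).ne' ofNat_ne_top
      have := (ENNReal.tendsto_nhds_zero.mp hs0) (ε' / 2 / 2) hδ
      obtain ⟨N, hN⟩ := eventually_atTop.mp this
      refine ⟨N, fun m hm n hn => ?_⟩
      have h1r : edist (u N) (u m) ≤ ε' / 2 / 2 := le_trans (hle _ _ (hmem N m hm)) (hN N le_rfl)
      have h2r : edist (u N) (u n) ≤ ε' / 2 / 2 := le_trans (hle _ _ (hmem N n hn)) (hN N le_rfl)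
      calc edist (u m) (u n) ≤ edist (u m) (u N) + edist (u N) (u n) := edist_triangle _ _ _
        _ = edist (u N) (u m) + edist (u N) (u n) := by rw [edist_comm]
        _ ≤ ε' / 2 / 2 + ε' / 2 / 2 := add_le_add h1r h2r
        _ = ε' / 2 := ENNReal.add_halves _
        _ < ε' := ENNReal.half_lt_self hε'0 hε't
        _ ≤ ε := min_le_left _ _
    obtain ⟨x₀, hx₀⟩ := cauchySeq_tendsto_of_complete hcauchy
    have hx₀mem : ∀ n, x₀ ∈ F (u n) := by
      intro n
      apply (h1 (u n)).mem_of_tendsto hx₀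
      filter_upwards [eventually_ge_atTop n] with m hm
      exact hmem n m hm
    have hx₀edist : Tendsto (fun n => edist x₀ (u n)) atTop (nhds 0) := by
      rw [ENNReal.tendsto_nhds_zero]
      intro ε hε
      rw [EMetric.tendsto_atTop] at hx₀
      obtain ⟨N, hN⟩ := hx₀ ε hε
      exact eventually_atTop.mpr ⟨N, fun n hn => by rw [edist_comm]; exact (hN n hn).le⟩
    have hstat : F x₀ = {x₀} := by
      ext y
      constructor
      · intro hy
        have hkey : ∀ n, edist x₀ y ≤ edist x₀ (u n) + s (u n) := by
          intro n
          have hyn : y ∈ F (u n) := h3 (u n) x₀ (hx₀mem n) hy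
          calc edist x₀ y ≤ edist x₀ (u n) + edist (u n) y := edist_triangle _ _ _
            _ ≤ edist x₀ (u n) + s (u n) := by gcongr; exact hle _ _ hyn
        have hlim : Tendsto (fun n => edist x₀ (u n) + s (u n)) atTop (nhds 0) := by
          simpa using hx₀edist.add hs0
        have : edist x₀ y ≤ 0 := ge_of_tendsto' hlim hkey
        have : edist x₀ y = 0 := le_antisymm this zero_le
        rw [edist_eq_zero] at this
        simp [this.symm]
      · intro hy
        simp at hy
        rw [hy]
        exact h2 x₀
    refine ⟨x₀, ?_, hstat⟩
    have := hx₀mem 0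
    simpa [hu] using this
  obtain ⟨x⟩ := (inferInstance : Nonempty X)
  obtain ⟨x₀, _, hx₀⟩ := main x
  exact ⟨⟨x₀, hx₀⟩, main⟩
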